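/- Let X_0 = x_0 x_0^* for a nonzero x_0 ∈ ℂ^d, and let X ∈ ℂ^{d×d} be Hermitian with ||X - X_0||_F ≤ η ||x_0||_2^2 for some η ≥ 0. Let λ_1 be the largest-magnitude eigenvalue of X with unit eigenvector v_1. Then min_{θ ∈ [0,2π]} || e^{iθ} x_0 - √|λ_1| v_1 ||_2 ≤ (1 + 2√2) η ||x_0||_2. -/

import Mathlib

open Real Complex Matrix

noncomputable def toE {d : ℕ} (x : Fin d → ℂ) : EuclideanSpace ℂ (Fin d) := WithLp.toLp 2 x

@[simp] lemma toE_apply {d : ℕ} (x : Fin d → ℂ) (i : Fin d) : toE x i = x i := rfl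

lemma toE_norm {d : ℕ} (x : Fin d → ℂ) : ‖toE x‖ = Real.sqrt (∑ i, ‖x i‖^2) :=
  EuclideanSpace.norm_eq _

lemma toE_normsq {d : ℕ} (x : Fin d → ℂ) : ‖toE x‖^2 = ∑ i, ‖x i‖^2 := by
  rw [toE_norm, Real.sq_sqrt (by positivity)]

lemma toE_inner {d : ℕ} (x y : Fin d → ℂ) :
    (inner ℂ (toE x) (toE y) : ℂ) = ∑ i, starRingEnd ℂ (x i) * y i := by
  simp [PiLp.inner_apply, RCLike.inner_apply, toE]
  exact Finset.sum_congr rfl fun _ _ => mul_comm _ _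

lemma frob_op_bound {d : ℕ} (E : Matrix (Fin d) (Fin d) ℂ) (v : Fin d → ℂ) :
    ‖toE (E.mulVec v)‖ ≤ Real.sqrt (∑ i, ∑ j, ‖E i j‖^2) * ‖toE v‖ := by
  have h1 : ∀ i, ‖(E.mulVec v) i‖^2 ≤ (∑ j, ‖E i j‖^2) * ‖toE v‖^2 := by
    intro i
    have hinner : (E.mulVec v) i = inner ℂ (toE fun j => starRingEnd ℂ (E i j)) (toE v) := by
      simp [Matrix.mulVec, dotProduct, toE_inner]
    have hb : ‖(E.mulVec v) i‖ ≤ ‖toE fun j => starRingEnd ℂ (E i j)‖ * ‖toE v‖ := by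
      rw [hinner]; exact norm_inner_le_norm (𝕜 := ℂ) _ _
    calc ‖(E.mulVec v) i‖^2 ≤ (‖toE fun j => starRingEnd ℂ (E i j)‖ * ‖toE v‖)^2 :=
          pow_le_pow_left₀ (norm_nonneg _) hb 2
      _ = (∑ j, ‖E i j‖^2) * ‖toE v‖^2 := by rw [mul_pow, toE_normsq]; simp
  have h2 : ‖toE (E.mulVec v)‖^2 ≤ (∑ i, ∑ j, ‖E i j‖^2) * ‖toE v‖^2 := by
    rw [toE_normsq, Finset.sum_mul]
    exact Finset.sum_le_sum fun i _ => h1 i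
  have := Real.sqrt_le_sqrt h2
  rwa [Real.sqrt_sq (norm_nonneg _), Real.sqrt_mul (by positivity),
    Real.sqrt_sq (norm_nonneg _)] at this

lemma herm_symm {d : ℕ} {X : Matrix (Fin d) (Fin d) ℂ} (hX : X.IsHermitian)
    (u v : Fin d → ℂ) :
    (inner ℂ (toE (X.mulVec u)) (toE v) : ℂ) = inner ℂ (toE u) (toE (X.mulVec v)) := by
  have h := (Matrix.isHermitian_iff_isSymmetric.1 hX) (toE u) (toE v)
  have h1 : Matrix.toEuclideanLin X (toE u) = toE (X.mulVec u) := rfl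
  have h2 : Matrix.toEuclideanLin X (toE v) = toE (X.mulVec v) := rfl
  rwa [h1, h2] at h

lemma weyl_step {d : ℕ} {X : Matrix (Fin d) (Fin d) ℂ} (hX : X.IsHermitian)
    (x0 : Fin d → ℂ) (hx0 : x0 ≠ 0) (n F : ℝ) (hFnn : 0 ≤ F)
    (hn : ‖toE x0‖^2 = n)
    (hz : ‖toE (X.mulVec x0 - (n:ℂ) • x0)‖ ≤ F * ‖toE x0‖) :
    ∃ i, |hX.eigenvalues i - n| ≤ F := by
  have hd : Nonempty (Fin d) := by
    by_contra h
    exact hx0 (funext fun i => absurd ⟨i⟩ h)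
  set B := hX.eigenvectorBasis with hB
  set μ := hX.eigenvalues with hμ
  set z : Fin d → ℂ := X.mulVec x0 - (n:ℂ) • x0 with hzdef
  have key : ∀ i, (inner ℂ (B i) (toE z) : ℂ) =
      ((μ i - n : ℝ) : ℂ) * inner ℂ (B i) (toE x0) := by
    intro i
    have hBi : toE ⇑(B i) = B i := rfl
    have hmv : X.mulVec ⇑(B i) = (μ i : ℂ) • ⇑(B i) := by
      have := hX.mulVec_eigenvectorBasis i
      rw [this]; funext j; simp [Complex.real_smul]; rfl
    have hsym := herm_symm hX (⇑(B i)) x0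
    rw [hmv] at hsym
    have hsmul : toE ((μ i : ℂ) • ⇑(B i)) = (μ i : ℂ) • B i := rfl
    rw [hsmul, inner_smul_left] at hsym
    have hz' : toE z = toE (X.mulVec x0) - (n:ℂ) • toE x0 := rfl
    rw [hz', inner_sub_right, inner_smul_right, hBi] at *
    rw [← hsym]
    push_cast
    ring_nf
    rw [Complex.conj_ofReal]
    ring
  have hnormz : ‖toE z‖^2 = ∑ i, ‖(inner ℂ (B i) (toE z) : ℂ)‖^2 := by
    rw [← B.repr.norm_map (toE z), EuclideanSpace.norm_eq, Real.sq_sqrt (by positivity)]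
    simp_rw [B.repr_apply_apply]
  have hnormx : ‖toE x0‖^2 = ∑ i, ‖(inner ℂ (B i) (toE x0) : ℂ)‖^2 := by
    rw [← B.repr.norm_map (toE x0), EuclideanSpace.norm_eq, Real.sq_sqrt (by positivity)]
    simp_rw [B.repr_apply_apply]
  obtain ⟨i0, -, hi0⟩ := Finset.exists_min_image Finset.univ (fun i => |μ i - n|)
    ⟨Classical.arbitrary (Fin d), Finset.mem_univ _⟩
  refine ⟨i0, ?_⟩
  have hlow : |μ i0 - n|^2 * n ≤ ‖toE z‖^2 := by
    rw [hnormz]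
    have he : |μ i0 - n|^2 * n = ∑ i, |μ i0 - n|^2 * ‖(inner ℂ (B i) (toE x0) : ℂ)‖^2 := by
      rw [← Finset.mul_sum, ← hnormx, hn]
    rw [he]
    apply Finset.sum_le_sum
    intro i _
    rw [key i, norm_mul, mul_pow, Complex.norm_real, Real.norm_eq_abs]
    apply mul_le_mul_of_nonneg_right _ (by positivity)
    exact pow_le_pow_left₀ (abs_nonneg _) (hi0 i (Finset.mem_univ i)) 2
  have hup : ‖toE z‖^2 ≤ F^2 * n := by
    calc ‖toE z‖^2 ≤ (F * ‖toE x0‖)^2 := pow_le_pow_left₀ (norm_nonneg _) hz 2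
      _ = F^2 * n := by rw [mul_pow, hn]
  have hxne : toE x0 ≠ 0 := by
    intro h
    exact hx0 (funext fun i => by simpa [toE] using congrArg (fun y : EuclideanSpace ℂ (Fin d) => WithLp.ofLp y i) h)
  have hnpos : 0 < n := by
    rw [← hn]
    exact pow_pos (norm_pos_iff.mpr hxne) 2
  have hsq : |μ i0 - n|^2 ≤ F^2 :=
    le_of_mul_le_mul_right (hlow.trans hup) hnpos
  have := Real.sqrt_le_sqrt hsq
  rwa [Real.sqrt_sq (abs_nonneg _), Real.sqrt_sq hFnn] at this

set_option maxHeartbeats 1000000 in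
lemma numeric_step (n ε a0 b lam r s2 : ℝ) (hn : 0 < n) (hε : 0 ≤ ε)
    (ha0 : 0 ≤ a0) (hb : 0 ≤ b)
    (hpyth : a0^2 + b^2 = n) (hlam1 : |lam - a0^2| ≤ ε) (hab : a0 * b ≤ ε)
    (hlow : n - ε ≤ |lam|) (hr : 0 ≤ r) (hr2 : r^2 = |lam|)
    (hs : s2^2 = 2) (hs0 : 0 ≤ s2) :
    ((a0 - r)^2 + b^2) * n ≤ (9 + 4*s2) * ε^2 := by
  have hs1 : 1 ≤ s2 := by nlinarith
  obtain ⟨hl1, hl2⟩ := abs_le.mp hlam1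
  have hb2 : b^2 ≤ n := by nlinarith
  rcases le_or_gt n (3*ε) with hcase | hcase
  · -- large-ε case
    have habs : |lam| ≤ a0^2 + ε := by
      rcases abs_cases lam with ⟨h, _⟩ | ⟨h, _⟩ <;> nlinarith
    rcases le_or_gt r a0 with hra | hra
    · -- (a0-r)^2 ≤ a0^2
      have h1 : (a0 - r)^2 ≤ a0^2 := by nlinarith
      nlinarith
    · -- (r-a0)^2 ≤ r^2 - a0^2 ≤ ε
      have h1 : (a0 - r)^2 ≤ ε := by nlinarith
      nlinarith
  · -- small-ε case
    have hlampos : 0 ≤ lam := by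
      by_contra h
      push_neg at h
      have : |lam| = -lam := abs_of_neg h
      nlinarith
    have hlameq : |lam| = lam := abs_of_nonneg hlampos
    have ha0sq : n/3 ≤ a0^2 := by
      rw [hlameq] at hlow
      nlinarith
    have hrl : r^2 = lam := by rw [hr2, hlameq]
    have har : |a0 - r| * a0 ≤ ε := by
      have h0 : (0:ℝ) ≤ a0 + r := by positivity
      have h1 : |a0 - r| * (a0 + r) = |a0^2 - lam| := by
        rw [← _root_.abs_of_nonneg h0, ← abs_mul]
        congr 1
        linear_combination -hrl
      have h2 : |a0^2 - lam| ≤ ε := by rw [abs_sub_comm]; exact hlam1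
      have h3 : |a0 - r| * a0 ≤ |a0 - r| * (a0 + r) := by
        apply mul_le_mul_of_nonneg_left _ (abs_nonneg _)
        linarith
      linarith [h1 ▸ h3, h2]
    have har2 : (a0 - r)^2 * a0^2 ≤ ε^2 := by
      have h4 : (|a0 - r| * a0)^2 ≤ ε^2 := pow_le_pow_left₀ (by positivity) har 2
      rw [mul_pow, _root_.sq_abs] at h4
      exact h4
    have hab2 : b^2 * a0^2 ≤ ε^2 := by
      have h4 : (a0 * b)^2 ≤ ε^2 := pow_le_pow_left₀ (by positivity) hab 2
      nlinarith [h4]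
    have hTa : ((a0-r)^2 + b^2) * a0^2 ≤ 2 * ε^2 := by nlinarith [har2, hab2]
    have hT3 : ((a0-r)^2 + b^2) * (n/3) ≤ 2 * ε^2 :=
      le_trans (mul_le_mul_of_nonneg_left ha0sq (by positivity)) hTa
    have e : ((a0-r)^2 + b^2) * (n/3) = ((a0-r)^2 + b^2) * n / 3 := by ring
    rw [e] at hT3
    nlinarith [sq_nonneg ε, hs1, hT3]


lemma phase_exists (psi : ℂ) (hpsi : ‖psi‖ = 1) :
    ∃ θ ∈ Set.Icc (0:ℝ) (2 * Real.pi), Complex.exp (θ * Complex.I) = psi := by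
  have habs : ‖psi‖ = 1 := hpsi
  have hexp : Complex.exp (psi.arg * Complex.I) = psi := by
    have h := Complex.norm_mul_exp_arg_mul_I psi
    rwa [habs, Complex.ofReal_one, one_mul] at h
  rcases le_or_gt 0 psi.arg with h | h
  · exact ⟨psi.arg, ⟨h, by linarith [Complex.arg_le_pi psi, Real.pi_pos]⟩, hexp⟩
  · refine ⟨psi.arg + 2*Real.pi, ⟨by linarith [Complex.neg_pi_lt_arg psi, Real.pi_pos],
      by linarith⟩, ?_⟩
    have h2 : ((psi.arg + 2*Real.pi : ℝ) : ℂ) * Complex.I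
        = psi.arg * Complex.I + 2*Real.pi*Complex.I := by push_cast; ring
    rw [h2, Complex.exp_add, hexp, Complex.exp_two_pi_mul_I, mul_one]


set_option maxHeartbeats 4000000 in
theorem stmt_15 (d : ℕ) (x0 : Fin d → ℂ) (hx0 : x0 ≠ 0)
    (X : Matrix (Fin d) (Fin d) ℂ) (hX : X.IsHermitian)
    (η : ℝ) (hη : 0 ≤ η)
    (hF : Real.sqrt (∑ i, ∑ j, ‖(X - Matrix.vecMulVec x0 (star x0)) i j‖^2) ≤
      η * ∑ i, ‖x0 i‖^2)
    (lam : ℝ) (v1 : Fin d → ℂ)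
    (hv1 : X.mulVec v1 = (lam : ℂ) • v1) (hv1n : ∑ i, ‖v1 i‖^2 = 1)
    (hmax : ∀ (μ : ℝ) (v : Fin d → ℂ), v ≠ 0 → X.mulVec v = (μ : ℂ) • v → |μ| ≤ |lam|) :
    ∃ θ ∈ Set.Icc (0:ℝ) (2 * π),
      Real.sqrt (∑ i, ‖Complex.exp (θ * Complex.I) * x0 i -
          (Real.sqrt |lam| : ℂ) * v1 i‖^2) ≤
        (1 + 2 * Real.sqrt 2) * η * Real.sqrt (∑ i, ‖x0 i‖^2) := by
  classical
  have hxne : toE x0 ≠ 0 := fun h => hx0 (funext fun i => by simpa [toE] using congrArg (fun y : EuclideanSpace ℂ (Fin d) => WithLp.ofLp y i) h)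
  set n : ℝ := ∑ i, ‖x0 i‖^2 with hn
  have hnx : ‖toE x0‖^2 = n := toE_normsq x0
  have hnpos : 0 < n := by
    rw [← hnx]; exact pow_pos (norm_pos_iff.mpr hxne) 2
  set E : Matrix (Fin d) (Fin d) ℂ := X - Matrix.vecMulVec x0 (star x0) with hEdef
  set F : ℝ := Real.sqrt (∑ i, ∑ j, ‖E i j‖^2) with hFdef
  have hFnn : 0 ≤ F := Real.sqrt_nonneg _
  set ε : ℝ := η * n with hεdef
  have hFε : F ≤ ε := hF
  have hεnn : 0 ≤ ε := mul_nonneg hη hnpos.le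
  have hv1norm : ‖toE v1‖ = 1 := by rw [toE_norm, hv1n, Real.sqrt_one]
  have hX0mul : ∀ v : Fin d → ℂ, (Matrix.vecMulVec x0 (star x0)).mulVec v
      = (inner ℂ (toE x0) (toE v) : ℂ) • x0 := by
    intro v
    funext i
    simp only [Matrix.mulVec, dotProduct, Matrix.vecMulVec_apply, Pi.smul_apply,
      smul_eq_mul, PiLp.inner_apply, RCLike.inner_apply, toE_apply, Pi.star_apply,
      RCLike.star_def]
    rw [Finset.sum_mul]
    exact Finset.sum_congr rfl fun j _ => by ring
  set α : ℂ := (inner ℂ (toE v1) (toE x0) : ℂ) with hα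
  set w : Fin d → ℂ := x0 - α • v1 with hw
  set a0 : ℝ := ‖α‖ with ha0
  set b : ℝ := ‖toE w‖ with hb
  have hbnn : 0 ≤ b := norm_nonneg _
  have ha0nn : 0 ≤ a0 := norm_nonneg _
  have hv1self : (inner ℂ (toE v1) (toE v1) : ℂ) = 1 := by
    rw [inner_self_eq_norm_sq_to_K, hv1norm]; norm_num
  have hvw : (inner ℂ (toE v1) (toE w) : ℂ) = 0 := by
    have h : toE w = toE x0 - α • toE v1 := rfl
    rw [h, inner_sub_right, inner_smul_right, hv1self, mul_one, ← hα, sub_self]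
  have hdecomp : toE x0 = α • toE v1 + toE w := by
    ext i
    simp only [toE_apply, PiLp.add_apply, PiLp.smul_apply, smul_eq_mul, hw, Pi.sub_apply,
      Pi.smul_apply]
    ring
  have hwv : (inner ℂ (toE w) (toE v1) : ℂ) = 0 := by
    rw [← inner_conj_symm, hvw, map_zero]
  have hwx : (inner ℂ (toE w) (toE x0) : ℂ) = ((b^2 : ℝ) : ℂ) := by
    rw [hdecomp, inner_add_right, inner_smul_right, hwv, mul_zero, zero_add,
      inner_self_eq_norm_sq_to_K, hb]
    push_cast
    ring_nf
    rfl
  have hpyth : a0^2 + b^2 = n := by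
    have h0 : (inner ℂ (α • toE v1) (toE w) : ℂ) = 0 := by
      rw [inner_smul_left, hvw, mul_zero]
    have h1 := norm_add_sq (𝕜 := ℂ) (α • toE v1) (toE w)
    rw [h0, ← hdecomp, hnx, norm_smul, hv1norm, mul_one] at h1
    simp only [map_zero, mul_zero, add_zero] at h1
    rw [ha0, hb]
    linarith [h1]
  -- action of E on v1
  have hx0v1 : (inner ℂ (toE x0) (toE v1) : ℂ) = starRingEnd ℂ α := by
    rw [hα, ← inner_conj_symm]
  have hEv1fun : E.mulVec v1 = (lam : ℂ) • v1 - (starRingEnd ℂ α) • x0 := by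
    rw [hEdef, Matrix.sub_mulVec, hv1, hX0mul v1, hx0v1]
  have hEv1E : toE (E.mulVec v1) = (lam : ℂ) • toE v1 - (starRingEnd ℂ α) • toE x0 := by
    rw [hEv1fun]; rfl
  have hEv1n : ‖toE (E.mulVec v1)‖ ≤ ε := by
    have h := frob_op_bound E v1
    rw [hv1norm, mul_one] at h
    exact h.trans hFε
  have hc1 : (inner ℂ (toE v1) (toE (E.mulVec v1)) : ℂ) = ((lam - a0^2 : ℝ) : ℂ) := by
    rw [hEv1E, inner_sub_right, inner_smul_right, inner_smul_right, hv1self, mul_one, ← hα,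
      RCLike.conj_mul]
    rw [ha0]
    push_cast
    ring_nf
    rfl
  have hlam1 : |lam - a0^2| ≤ ε := by
    have h1 : ‖(inner ℂ (toE v1) (toE (E.mulVec v1)) : ℂ)‖ ≤ ε := by
      calc ‖(inner ℂ (toE v1) (toE (E.mulVec v1)) : ℂ)‖
          ≤ ‖toE v1‖ * ‖toE (E.mulVec v1)‖ := norm_inner_le_norm _ _
        _ = ‖toE (E.mulVec v1)‖ := by rw [hv1norm, one_mul]
        _ ≤ ε := hEv1n
    rwa [hc1, Complex.norm_real, Real.norm_eq_abs] at h1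
  have hc2 : (inner ℂ (toE w) (toE (E.mulVec v1)) : ℂ)
      = -(starRingEnd ℂ α) * ((b^2 : ℝ) : ℂ) := by
    rw [hEv1E, inner_sub_right, inner_smul_right, inner_smul_right, hwv, mul_zero, hwx]
    ring
  have hab : a0 * b ≤ ε := by
    have h1 : ‖(inner ℂ (toE w) (toE (E.mulVec v1)) : ℂ)‖ ≤ b * ε := by
      calc ‖(inner ℂ (toE w) (toE (E.mulVec v1)) : ℂ)‖
          ≤ ‖toE w‖ * ‖toE (E.mulVec v1)‖ := norm_inner_le_norm _ _
        _ ≤ b * ε := mul_le_mul_of_nonneg_left hEv1n (norm_nonneg _)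
    rw [hc2] at h1
    have h2 : ‖-(starRingEnd ℂ α) * ((b^2 : ℝ) : ℂ)‖ = a0 * b^2 := by
      rw [norm_mul, norm_neg, RCLike.norm_conj, Complex.norm_real, Real.norm_eq_abs,
        _root_.abs_of_nonneg (sq_nonneg b), ha0]
    rw [h2] at h1
    rcases eq_or_lt_of_le hbnn with h3 | h3
    · rw [← h3, mul_zero]; exact hεnn
    · by_contra hcon
      push_neg at hcon
      nlinarith [mul_lt_mul_of_pos_right hcon h3, h1]
  -- Weyl step
  have hx0self : (inner ℂ (toE x0) (toE x0) : ℂ) = (n : ℂ) := by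
    rw [inner_self_eq_norm_sq_to_K, ← hnx]
    push_cast
    ring_nf
    rfl
  have hX0x0 : (Matrix.vecMulVec x0 (star x0)).mulVec x0 = (n : ℂ) • x0 := by
    rw [hX0mul x0, hx0self]
  have hzfun : X.mulVec x0 - (n : ℂ) • x0 = E.mulVec x0 := by
    rw [hEdef, Matrix.sub_mulVec, hX0x0]
  have hzb : ‖toE (X.mulVec x0 - (n : ℂ) • x0)‖ ≤ ε * ‖toE x0‖ := by
    rw [hzfun]
    exact (frob_op_bound E x0).trans (mul_le_mul_of_nonneg_right hFε (norm_nonneg _))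
  obtain ⟨i, hi⟩ := weyl_step hX x0 hx0 n ε hεnn hnx hzb
  have hmv : X.mulVec ⇑(hX.eigenvectorBasis i)
      = ((hX.eigenvalues i : ℝ) : ℂ) • ⇑(hX.eigenvectorBasis i) := by
    rw [hX.mulVec_eigenvectorBasis i]
    funext j
    simp [Complex.real_smul]
  have hBne : ⇑(hX.eigenvectorBasis i) ≠ (0 : Fin d → ℂ) := by
    intro h
    apply hX.eigenvectorBasis.orthonormal.ne_zero i
    ext j
    simpa using congrFun h j
  have hmaxi := hmax (hX.eigenvalues i) _ hBne hmv
  have hlow : n - ε ≤ |lam| := by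
    have h1 := abs_le.mp hi
    have h2 : n - ε ≤ hX.eigenvalues i := by linarith [h1.1]
    linarith [le_abs_self (hX.eigenvalues i), hmaxi]
  -- the phase
  set r : ℝ := Real.sqrt |lam| with hr
  have hrnn : 0 ≤ r := Real.sqrt_nonneg _
  have hr2 : r^2 = |lam| := Real.sq_sqrt (abs_nonneg _)
  have hψex : ∃ ψ : ℂ, ‖ψ‖ = 1 ∧ ψ * α = ((a0 : ℝ) : ℂ) := by
    by_cases hα0 : α = 0
    · refine ⟨1, by norm_num, ?_⟩
      rw [hα0, mul_zero, ha0, hα0]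
      norm_num
    · refine ⟨starRingEnd ℂ α / ((a0 : ℝ) : ℂ), ?_, ?_⟩
      · rw [norm_div, RCLike.norm_conj, Complex.norm_real, Real.norm_eq_abs,
          _root_.abs_of_nonneg ha0nn, ha0, div_self (norm_ne_zero_iff.mpr hα0)]
      · have ha0ne : ((a0 : ℝ) : ℂ) ≠ 0 := by
          simp only [ne_eq, Complex.ofReal_eq_zero, ha0]
          exact norm_ne_zero_iff.mpr hα0
        field_simp
        rw [RCLike.conj_mul, ha0]
        push_cast
        ring_nf
        rfl
  obtain ⟨ψ, hψ1, hψα⟩ := hψex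
  obtain ⟨θ, hθmem, hθexp⟩ := phase_exists ψ hψ1
  refine ⟨θ, hθmem, ?_⟩
  simp only [hθexp]
  set u : Fin d → ℂ := fun i => ψ * x0 i - ((r : ℝ) : ℂ) * v1 i with hu
  have hudec : toE u = ((a0 - r : ℝ) : ℂ) • toE v1 + ψ • toE w := by
    ext j
    simp only [toE_apply, PiLp.add_apply, PiLp.smul_apply, smul_eq_mul, hu, hw, Pi.sub_apply,
      Pi.smul_apply]
    push_cast
    linear_combination (v1 j) * hψα
  have hinner0 : (inner ℂ (((a0 - r : ℝ) : ℂ) • toE v1) (ψ • toE w) : ℂ) = 0 := by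
    rw [inner_smul_left, inner_smul_right, hvw]
    ring
  have hT2 : ‖toE u‖^2 = (a0 - r)^2 + b^2 := by
    have h1 := norm_add_sq (𝕜 := ℂ) (((a0 - r : ℝ) : ℂ) • toE v1) (ψ • toE w)
    rw [hinner0, ← hudec] at h1
    simp only [map_zero, mul_zero, add_zero] at h1
    rw [h1, norm_smul, norm_smul, hv1norm, hψ1, mul_one, one_mul, Complex.norm_real,
      Real.norm_eq_abs, _root_.sq_abs]
  have hnum := numeric_step n ε a0 b lam r (Real.sqrt 2) hnpos hεnn ha0nn hbnn hpyth hlam1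
    hab hlow hrnn hr2 (Real.sq_sqrt (by norm_num)) (Real.sqrt_nonneg 2)
  have hRHSsq : ((1 + 2*Real.sqrt 2) * η * Real.sqrt n)^2 = (9 + 4*Real.sqrt 2) * η^2 * n := by
    have h2 : Real.sqrt 2 ^ 2 = 2 := Real.sq_sqrt (by norm_num)
    have hn2 : Real.sqrt n ^ 2 = n := Real.sq_sqrt hnpos.le
    rw [mul_pow, mul_pow, hn2]
    linear_combination (4*η^2*n) * h2
  have hT2' : ‖toE u‖^2 ≤ ((1 + 2*Real.sqrt 2) * η * Real.sqrt n)^2 := by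
    rw [hT2, hRHSsq]
    have he : (9 + 4*Real.sqrt 2) * ε^2 = ((9 + 4*Real.sqrt 2) * η^2 * n) * n := by
      rw [hεdef]; ring
    rw [he] at hnum
    exact le_of_mul_le_mul_right hnum hnpos
  have hfin : ‖toE u‖ ≤ (1 + 2*Real.sqrt 2) * η * Real.sqrt n :=
    le_of_pow_le_pow_left₀ (by norm_num)
      (mul_nonneg (mul_nonneg (by positivity) hη) (Real.sqrt_nonneg _)) hT2'
  calc Real.sqrt (∑ i, ‖ψ * x0 i - ((r : ℝ) : ℂ) * v1 i‖^2)
      = ‖toE u‖ := (toE_norm u).symm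
    _ ≤ (1 + 2*Real.sqrt 2) * η * Real.sqrt n := hfin
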